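/- arXiv:0903.5060 — 12 statements merged into one kernel-verified Lean document; each statement's English description precedes it below -/
import Mathlib

section
/- Let H and G be groups and let α : G × H → H (written α(g,h) = g ▷ h) and β : G × H → G (written β(g,h) = g ◁ h) be arbitrary maps. Then the multiplication (h₁, g₁)·(h₂, g₂) := (h₁(g₁ ▷ h₂), (g₁ ◁ h₂)g₂) on the set H × G is a group structure with unit (1_H, 1_G) if and only if (H, G, α, β) is a matched pair of groups, i.e. α is a left action of the group G on the underlying set of H, β is a right action of the group H on the underlying set of G, and g ▷ (h₁h₂) = (g ▷ h₁)((g ◁ h₁) ▷ h₂) and (g₁g₂) ◁ h = (g₁ ◁ (g₂ ▷ h))(g₂ ◁ h) hold for all h, h₁, h₂ ∈ H and g, g₁, g₂ ∈ G. -/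
/-- A matched pair of groups `(H, G, α, β)` in the sense of Takeuchi:
`act g h = g ▷ h` is a left action of the group `G` on the set `H`,
`coact g h = g ◁ h` is a right action of the group `H` on the set `G`, and the
two compatibility conditions hold. -/
structure IsMatchedPair {H G : Type*} [Group H] [Group G]
    (act : G → H → H) (coact : G → H → G) : Prop where
  one_act : ∀ h, act 1 h = h
  mul_act : ∀ g₁ g₂ h, act (g₁ * g₂) h = act g₁ (act g₂ h)
  coact_one : ∀ g, coact g 1 = g
  coact_mul : ∀ g h₁ h₂, coact g (h₁ * h₂) = coact (coact g h₁) h₂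
  act_mul : ∀ g h₁ h₂, act g (h₁ * h₂) = act g h₁ * act (coact g h₁) h₂
  mul_coact : ∀ g₁ g₂ h, coact (g₁ * g₂) h = coact g₁ (act g₂ h) * coact g₂ h

namespace IsMatchedPair

variable {H G : Type*} [Group H] [Group G] {act : G → H → H} {coact : G → H → G}

theorem act_one (mp : IsMatchedPair act coact) (g : G) : act g 1 = 1 := by
  have h := mp.act_mul g 1 1
  rw [mp.coact_one, one_mul] at h
  exact (left_eq_mul.mp h)

theorem one_coact (mp : IsMatchedPair act coact) (h : H) : coact 1 h = 1 := by
  have e := mp.mul_coact 1 1 h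
  rw [mp.one_act, one_mul] at e
  exact (left_eq_mul.mp e)

end IsMatchedPair

/-- The bicrossed product multiplication on the set `H × G`:
`(h₁, g₁) · (h₂, g₂) = (h₁ (g₁ ▷ h₂), (g₁ ◁ h₂) g₂)`. -/
def bicrossMul {H G : Type*} [Group H] [Group G] (act : G → H → H) (coact : G → H → G)
    (x y : H × G) : H × G :=
  (x.1 * act x.2 y.1, coact x.2 y.1 * y.2)

/-- The multiplication `(h₁, g₁)·(h₂, g₂) = (h₁(g₁ ▷ h₂), (g₁ ◁ h₂)g₂)` on the set
`H × G` is a group structure with unit `(1_H, 1_G)` if and only if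
`(H, G, act, coact)` is a matched pair of groups. -/
theorem bicrossMul_group_iff_isMatchedPair {H G : Type*} [Group H] [Group G]
    (act : G → H → H) (coact : G → H → G) :
    ((∀ x y z : H × G,
        bicrossMul act coact (bicrossMul act coact x y) z =
          bicrossMul act coact x (bicrossMul act coact y z)) ∧
      (∀ x : H × G, bicrossMul act coact (1, 1) x = x) ∧
      (∀ x : H × G, bicrossMul act coact x (1, 1) = x) ∧
      (∀ x : H × G, ∃ y : H × G,
        bicrossMul act coact x y = (1, 1) ∧ bicrossMul act coact y x = (1, 1))) ↔
      IsMatchedPair act coact := by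

  constructor
  · rintro ⟨assoc, lu, ru, -⟩
    have h1a : ∀ h : H, act 1 h = h := fun h => by
      have := lu (h, (1 : G)); simp [bicrossMul, Prod.ext_iff] at this; exact this.1
    have h1c : ∀ h : H, coact 1 h = 1 := fun h => by
      have := lu (h, (1 : G)); simp [bicrossMul, Prod.ext_iff] at this; exact this.2
    have h2a : ∀ g : G, act g 1 = 1 := fun g => by
      have := ru ((1 : H), g); simp [bicrossMul, Prod.ext_iff] at this; exact this.1
    have h2c : ∀ g : G, coact g 1 = g := fun g => by
      have := ru ((1 : H), g); simp [bicrossMul, Prod.ext_iff] at this; exact this.2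
    have A : ∀ (g₁ g₂ : G) (h : H),
        act (g₁ * g₂) h = act g₁ (act g₂ h) ∧
          coact (g₁ * g₂) h = coact g₁ (act g₂ h) * coact g₂ h := fun g₁ g₂ h => by
      have := assoc ((1 : H), g₁) ((1 : H), g₂) (h, (1 : G))
      simpa [bicrossMul, Prod.ext_iff, h2a, h2c] using this
    have B : ∀ (g : G) (h₁ h₂ : H),
        act g (h₁ * h₂) = act g h₁ * act (coact g h₁) h₂ ∧
          coact g (h₁ * h₂) = coact (coact g h₁) h₂ := fun g h₁ h₂ => by
      have := assoc ((1 : H), g) (h₁, (1 : G)) (h₂, (1 : G))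
      have := this.symm
      simpa [bicrossMul, Prod.ext_iff, h1a, h1c, h2a, h2c] using this
    exact ⟨h1a, fun g₁ g₂ h => (A g₁ g₂ h).1, h2c, fun g h₁ h₂ => (B g h₁ h₂).2,
      fun g h₁ h₂ => (B g h₁ h₂).1, fun g₁ g₂ h => (A g₁ g₂ h).2⟩
  · intro mp
    refine ⟨?_, ?_, ?_, ?_⟩
    · intro x y z
      simp [bicrossMul, mp.mul_act, mp.mul_coact, mp.act_mul, mp.coact_mul, mul_assoc]
    · intro x
      simp [bicrossMul, mp.one_act, mp.one_coact]
    · intro x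
      simp [bicrossMul, mp.act_one, mp.coact_one]
    · rintro ⟨h, g⟩
      refine ⟨(act g⁻¹ h⁻¹, coact g⁻¹ h⁻¹), ?_, ?_⟩
      · simp [bicrossMul, ← mp.mul_act, ← mp.mul_coact, mp.one_act, mp.one_coact]
      · simp [bicrossMul, ← mp.act_mul, ← mp.coact_mul, mp.act_one, mp.coact_one]
end

section
/- Let (H, G, α, β) be a matched pair of groups. The center of the bicrossed product H ⋈ G is Z(H ⋈ G) = {(h, g) ∈ Fix(H) × Fix(G) | g ▷ x = h⁻¹xh for all x ∈ H, and y ◁ h = gyg⁻¹ for all y ∈ G}. -/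
/-- The underlying set `H × G` of the bicrossed product associated to the maps
`act` and `coact`. -/
@[ext]
structure Bicross {H G : Type*} (act : G → H → H) (coact : G → H → G) where
  h : H
  g : G

namespace Bicross

variable {H G : Type*} [Group H] [Group G] {act : G → H → H} {coact : G → H → G}

instance : Mul (Bicross act coact) :=
  ⟨fun x y => ⟨x.h * act x.g y.h, coact x.g y.h * y.g⟩⟩

instance : One (Bicross act coact) := ⟨⟨1, 1⟩⟩

instance : Inv (Bicross act coact) :=
  ⟨fun x => ⟨act x.g⁻¹ x.h⁻¹, coact x.g⁻¹ x.h⁻¹⟩⟩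

@[simp] theorem mul_def (x y : Bicross act coact) :
    x * y = ⟨x.h * act x.g y.h, coact x.g y.h * y.g⟩ := rfl

@[simp] theorem one_def : (1 : Bicross act coact) = ⟨1, 1⟩ := rfl

@[simp] theorem inv_def (x : Bicross act coact) :
    x⁻¹ = ⟨act x.g⁻¹ x.h⁻¹, coact x.g⁻¹ x.h⁻¹⟩ := rfl

/-- The bicrossed product `H ⋈ G` of a matched pair of groups. -/
instance group [hmp : Fact (IsMatchedPair act coact)] : Group (Bicross act coact) :=
  have mp := hmp.out
  Group.ofLeftAxioms
    (by
      rintro ⟨a, p⟩ ⟨b, q⟩ ⟨c, r⟩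
      simp only [mul_def, mk.injEq]
      constructor
      · rw [mp.act_mul, mp.mul_act, mul_assoc]
      · rw [mp.mul_coact, mp.coact_mul, mul_assoc])
    (by
      rintro ⟨a, p⟩
      simp only [mul_def, one_def, mk.injEq]
      rw [mp.one_act, mp.one_coact, one_mul, one_mul]
      exact ⟨rfl, rfl⟩)
    (by
      rintro ⟨a, p⟩
      simp only [mul_def, inv_def, one_def, mk.injEq]
      constructor
      · rw [← mp.act_mul, inv_mul_cancel, mp.act_one]
      · rw [← mp.coact_mul, inv_mul_cancel, mp.coact_one, inv_mul_cancel])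

end Bicross
namespace IsMatchedPair

variable {H G : Type*} [Group H] [Group G] {act : G → H → H} {coact : G → H → G}

/-- `Fix(H) = {h ∈ H | g ▷ h = h for all g ∈ G}` as a subgroup of `H`. -/
def fixH (mp : IsMatchedPair act coact) : Subgroup H where
  carrier := {h : H | ∀ g : G, act g h = h}
  one_mem' := fun g => mp.act_one g
  mul_mem' := by
    intro h₁ h₂ m₁ m₂ g
    rw [mp.act_mul, m₁ g, m₂ (coact g h₁)]
  inv_mem' := by
    intro h m g
    have e := mp.act_mul g h⁻¹ h
    rw [inv_mul_cancel, mp.act_one, m (coact g h⁻¹)] at e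
    exact mul_eq_one_iff_eq_inv.mp e.symm

/-- `Fix(G) = {g ∈ G | g ◁ h = g for all h ∈ H}` as a subgroup of `G`. -/
def fixG (mp : IsMatchedPair act coact) : Subgroup G where
  carrier := {g : G | ∀ h : H, coact g h = g}
  one_mem' := fun h => mp.one_coact h
  mul_mem' := by
    intro g₁ g₂ m₁ m₂ h
    rw [mp.mul_coact, m₁ (act g₂ h), m₂ h]
  inv_mem' := by
    intro g m h
    have surj : act g (act g⁻¹ h) = h := by
      rw [← mp.mul_act, mul_inv_cancel, mp.one_act]
    have e := mp.mul_coact g⁻¹ g (act g⁻¹ h)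
    rw [inv_mul_cancel, mp.one_coact, surj, m (act g⁻¹ h)] at e
    exact mul_eq_one_iff_eq_inv.mp e.symm

@[simp] theorem mem_fixH (mp : IsMatchedPair act coact) (h : H) :
    h ∈ mp.fixH ↔ ∀ g : G, act g h = h := Iff.rfl

@[simp] theorem mem_fixG (mp : IsMatchedPair act coact) (g : G) :
    g ∈ mp.fixG ↔ ∀ h : H, coact g h = g := Iff.rfl

end IsMatchedPair

/-- The center of the bicrossed product `H ⋈ G` of a matched pair consists of the
pairs `(h, g) ∈ Fix(H) × Fix(G)` such that `g ▷ x = h⁻¹xh` for all `x ∈ H` and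
`y ◁ h = gyg⁻¹` for all `y ∈ G`. -/
theorem center_bicross {H G : Type*} [Group H] [Group G]
    {act : G → H → H} {coact : G → H → G} [hmp : Fact (IsMatchedPair act coact)] :
    ∀ x : Bicross act coact,
      x ∈ Subgroup.center (Bicross act coact) ↔
        (x.h ∈ hmp.out.fixH ∧ x.g ∈ hmp.out.fixG ∧
          (∀ y : H, act x.g y = x.h⁻¹ * y * x.h) ∧
          (∀ y : G, coact y x.h = x.g * y * x.g⁻¹)) := by
  have mp := hmp.out
  rintro ⟨h, g⟩
  rw [Subgroup.mem_center_iff]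
  constructor
  · intro hc
    have key : ∀ a p, a * act p h = h * act g a ∧ coact p h * g = coact g a * p := by
      intro a p
      have := hc ⟨a, p⟩
      simp only [Bicross.mul_def, Bicross.mk.injEq] at this
      exact ⟨this.1, this.2⟩
    have hfix : ∀ p : G, act p h = h := by
      intro p
      have := (key 1 p).1
      rwa [one_mul, mp.act_one, mul_one] at this
    have gfix : ∀ a : H, coact g a = g := by
      intro a
      have := (key a 1).2
      rw [mp.one_coact, one_mul, mul_one] at this
      exact this.symm
    refine ⟨hfix, gfix, ?_, ?_⟩
    · intro y
      have := (key y 1).1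
      rw [hfix 1] at this
      show act g y = h⁻¹ * y * h
      rw [mul_assoc]
      exact eq_inv_mul_of_mul_eq this.symm
    · intro y
      have := (key 1 y).2
      rw [mp.coact_one] at this
      show coact y h = g * y * g⁻¹
      exact eq_mul_inv_of_mul_eq this
  · rintro ⟨hfix, gfix, hconj, gconj⟩ ⟨a, p⟩
    simp only [Bicross.mul_def, Bicross.mk.injEq]
    refine ⟨?_, ?_⟩
    · show a * act p h = h * act g a
      rw [hconj a, hfix p, mul_assoc, mul_inv_cancel_left]
    · show coact p h * g = coact g a * p
      rw [gfix a, gconj p, mul_assoc, inv_mul_cancel, mul_one]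
end

section
/- Let H be a group, σ ∈ Aut(H), and let (H, G, α, β) and (H, G', α', β') be matched pairs (with actions written ▷, ◁ and ▷', ◁' respectively, and the multiplication of G' written *). Suppose r : G' → H and v : G' → G are maps satisfying, for all g', g₁', g₂' ∈ G' and h ∈ H: (p1) σ(g' ▷' h)·r(g' ◁' h) = r(g')·(v(g') ▷ σ(h)); (p2) v(g' ◁' h) = v(g') ◁ σ(h); (p3) r(g₁' * g₂') = r(g₁')·(v(g₁') ▷ r(g₂')); (p4) v(g₁' * g₂') = (v(g₁') ◁ r(g₂'))·v(g₂'). Then the map ψ : H ⋈' G' → H ⋈ G defined by ψ(h, g') = (σ(h)r(g'), v(g')) is a group homomorphism between the bicrossed products and satisfies ψ(h, 1_{G'}) = (σ(h), 1_G) for all h ∈ H. -/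
/-- Given matched pairs `(H, G, act, coact)` and `(H, G', act', coact')`, an
automorphism `σ` of `H`, and maps `r : G' → H`, `v : G' → G` satisfying the
compatibility conditions (p1)–(p4), the map `ψ(h, g') = (σ(h)r(g'), v(g'))` is a
group homomorphism `H ⋈' G' → H ⋈ G` with `ψ(h, 1) = (σ(h), 1)`. -/
theorem bicross_hom_of_pair {H G G' : Type*} [Group H] [Group G] [Group G']
    {act : G → H → H} {coact : G → H → G} {act' : G' → H → H} {coact' : G' → H → G'}
    (mp : IsMatchedPair act coact) (mp' : IsMatchedPair act' coact')
    (σ : H ≃* H) (r : G' → H) (v : G' → G)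
    (p1 : ∀ (g' : G') (h : H), σ (act' g' h) * r (coact' g' h) = r g' * act (v g') (σ h))
    (p2 : ∀ (g' : G') (h : H), v (coact' g' h) = coact (v g') (σ h))
    (p3 : ∀ g₁' g₂' : G', r (g₁' * g₂') = r g₁' * act (v g₁') (r g₂'))
    (p4 : ∀ g₁' g₂' : G', v (g₁' * g₂') = coact (v g₁') (r g₂') * v g₂') :
    let ψ : Bicross act' coact' → Bicross act coact :=
      fun x => ⟨σ x.h * r x.g, v x.g⟩
    (∀ x y : Bicross act' coact', ψ (x * y) = ψ x * ψ y) ∧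
      ∀ h : H, ψ ⟨h, 1⟩ = ⟨σ h, 1⟩ := by
  have hr1 : r 1 = 1 := by
    have e := p3 1 1
    rw [one_mul] at e
    have e2 : act (v 1) (r 1) = 1 := by
      have := (left_eq_mul.mp e); exact this
    have : r 1 = act ((v 1)⁻¹ * v 1) (r 1) := by rw [inv_mul_cancel, mp.one_act]
    rw [mp.mul_act, e2, mp.act_one] at this
    exact this
  have hv1 : v 1 = 1 := by
    have e := p4 1 1
    rw [one_mul, hr1, mp.coact_one] at e
    exact mul_eq_left.mp e.symm
  intro ψ
  constructor
  · rintro ⟨a, p⟩ ⟨b, q⟩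
    show (⟨σ (a * act' p b) * r (coact' p b * q), v (coact' p b * q)⟩ :
        Bicross act coact) = _
    simp only [ψ, Bicross.mul_def]
    ext <;> simp only
    · rw [p3, p2, map_mul, mp.act_mul, mul_assoc (σ a), ← mul_assoc (σ (act' p b)), p1,
        mul_assoc, mul_assoc]
    · rw [p4, p2, mp.coact_mul]
  · intro h
    show (⟨σ h * r 1, v 1⟩ : Bicross act coact) = _
    rw [hr1, hv1, mul_one]
end

section
/- Let H be a group, σ ∈ Aut(H), and let (H, G, α, β) and (H, G', α', β') be matched pairs (actions ▷, ◁ and ▷', ◁'; multiplication of G' written *). Let ψ : H ⋈' G' → H ⋈ G be any group homomorphism between the bicrossed products satisfying ψ(h, 1_{G'}) = (σ(h), 1_G) for all h ∈ H. Then there exist unique maps r : G' → H and v : G' → G such that ψ(h, g') = (σ(h)r(g'), v(g')) for all h ∈ H, g' ∈ G'; moreover r(1_{G'}) = 1_H, v(1_{G'}) = 1_G, and the pair (r, v) satisfies: σ(g' ▷' h)·r(g' ◁' h) = r(g')·(v(g') ▷ σ(h)); v(g' ◁' h) = v(g') ◁ σ(h); r(g₁' * g₂') = r(g₁')·(v(g₁')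 ▷ r(g₂')); and v(g₁' * g₂') = (v(g₁') ◁ r(g₂'))·v(g₂') for all g', g₁', g₂' ∈ G' and h ∈ H. -/
/-- Any group homomorphism `ψ : H ⋈' G' → H ⋈ G` between the bicrossed products of
two matched pairs satisfying `ψ(h, 1) = (σ(h), 1)` for an automorphism `σ` of `H`
is of the form `ψ(h, g') = (σ(h)r(g'), v(g'))` for unique maps `r : G' → H`,
`v : G' → G`; moreover `r(1) = 1`, `v(1) = 1` and `(r, v)` satisfies the
compatibility conditions (p1)–(p4). -/
theorem pair_of_bicross_hom {H G G' : Type*} [Group H] [Group G] [Group G']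
    {act : G → H → H} {coact : G → H → G} {act' : G' → H → H} {coact' : G' → H → G'}
    (mp : IsMatchedPair act coact) (mp' : IsMatchedPair act' coact')
    (σ : H ≃* H) (ψ : Bicross act' coact' → Bicross act coact)
    (hψ : ∀ x y : Bicross act' coact', ψ (x * y) = ψ x * ψ y)
    (hσ : ∀ h : H, ψ ⟨h, 1⟩ = ⟨σ h, 1⟩) :
    ∃ (r : G' → H) (v : G' → G),
      (∀ (h : H) (g' : G'), ψ ⟨h, g'⟩ = ⟨σ h * r g', v g'⟩) ∧
      (∀ (r' : G' → H) (v' : G' → G),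
        (∀ (h : H) (g' : G'), ψ ⟨h, g'⟩ = ⟨σ h * r' g', v' g'⟩) → r' = r ∧ v' = v) ∧
      r 1 = 1 ∧ v 1 = 1 ∧
      (∀ (g' : G') (h : H), σ (act' g' h) * r (coact' g' h) = r g' * act (v g') (σ h)) ∧
      (∀ (g' : G') (h : H), v (coact' g' h) = coact (v g') (σ h)) ∧
      (∀ g₁' g₂' : G', r (g₁' * g₂') = r g₁' * act (v g₁') (r g₂')) ∧
      (∀ g₁' g₂' : G', v (g₁' * g₂') = coact (v g₁') (r g₂') * v g₂') := by
  
  set r : G' → H := fun g' => (ψ ⟨1, g'⟩).h with hr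
  set v : G' → G := fun g' => (ψ ⟨1, g'⟩).g with hv
  have hψ1 : ∀ g' : G', ψ ⟨1, g'⟩ = ⟨r g', v g'⟩ := fun g' => by
    simp [hr, hv]
  have key : ∀ (h : H) (g' : G'), ψ ⟨h, g'⟩ = ⟨σ h * r g', v g'⟩ := by
    intro h g'
    have e : (⟨h, 1⟩ : Bicross act' coact') * ⟨1, g'⟩ = ⟨h, g'⟩ := by
      simp [mp'.act_one, mp'.one_coact, mp'.coact_one]
    calc ψ ⟨h, g'⟩ = ψ (⟨h, 1⟩ * ⟨1, g'⟩) := by rw [e]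
      _ = ψ ⟨h, 1⟩ * ψ ⟨1, g'⟩ := hψ _ _
      _ = ⟨σ h, 1⟩ * ⟨r g', v g'⟩ := by rw [hσ, hψ1]
      _ = ⟨σ h * r g', v g'⟩ := by simp [mp.one_act, mp.one_coact]
  have h11 : ψ ⟨1, 1⟩ = (⟨σ 1 * r 1, v 1⟩ : Bicross act coact) := key 1 1
  rw [hσ 1] at h11
  have hr1 : r 1 = 1 := by
    have := congrArg Bicross.h h11
    simpa using this.symm
  have hv1 : v 1 = 1 := by
    have := congrArg Bicross.g h11
    simpa using this.symm
  refine ⟨r, v, key, ?_, hr1, hv1, ?_, ?_, ?_, ?_⟩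
  · intro r' v' hk
    constructor <;> funext g'
    · have := (hk 1 g').symm.trans (key 1 g')
      have := congrArg Bicross.h this
      simpa using this
    · have := (hk 1 g').symm.trans (key 1 g')
      have := congrArg Bicross.g this
      simpa using this
  · intro g' h
    have e : (⟨1, g'⟩ : Bicross act' coact') * ⟨h, 1⟩ = ⟨act' g' h, coact' g' h⟩ := by
      simp [mp'.coact_one]
    have e2 := hψ (⟨1, g'⟩ : Bicross act' coact') ⟨h, 1⟩
    rw [e, key, hψ1, hσ] at e2
    have := congrArg Bicross.h e2
    simpa using this
  · intro g' h
    have e : (⟨1, g'⟩ : Bicross act' coact') * ⟨h, 1⟩ = ⟨act' g' h, coact' g' h⟩ := by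
      simp [mp'.coact_one]
    have e2 := hψ (⟨1, g'⟩ : Bicross act' coact') ⟨h, 1⟩
    rw [e, key, hψ1, hσ] at e2
    have := congrArg Bicross.g e2
    simpa using this
  · intro g₁' g₂'
    have e : (⟨1, g₁'⟩ : Bicross act' coact') * ⟨1, g₂'⟩ = ⟨1, g₁' * g₂'⟩ := by
      simp [mp'.act_one, mp'.coact_one]
    have e2 := hψ (⟨1, g₁'⟩ : Bicross act' coact') ⟨1, g₂'⟩
    rw [e, hψ1, hψ1, hψ1] at e2
    have := congrArg Bicross.h e2
    simpa using this
  · intro g₁' g₂'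
    have e : (⟨1, g₁'⟩ : Bicross act' coact') * ⟨1, g₂'⟩ = ⟨1, g₁' * g₂'⟩ := by
      simp [mp'.act_one, mp'.coact_one]
    have e2 := hψ (⟨1, g₁'⟩ : Bicross act' coact') ⟨1, g₂'⟩
    rw [e, hψ1, hψ1, hψ1] at e2
    have := congrArg Bicross.g e2
    simpa using this
end

section
/- Let H be a group, σ ∈ Aut(H), (H, G, α, β) and (H, G', α', β') matched pairs, and let ψ : H ⋈' G' → H ⋈ G be a group homomorphism of the form ψ(h, g') = (σ(h)r(g'), v(g')) for maps r : G' → H and v : G' → G satisfying conditions (p1)–(p4). Then ψ is an isomorphism of groups if and only if the map v : G' → G is bijective. -/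
/-- A homomorphism `ψ : H ⋈' G' → H ⋈ G` of the form `ψ(h, g') = (σ(h)r(g'), v(g'))`
with `(r, v)` satisfying (p1)–(p4) is an isomorphism of groups if and only if
`v : G' → G` is bijective. -/
theorem bicross_hom_bijective_iff {H G G' : Type*} [Group H] [Group G] [Group G']
    {act : G → H → H} {coact : G → H → G} {act' : G' → H → H} {coact' : G' → H → G'}
    (mp : IsMatchedPair act coact) (mp' : IsMatchedPair act' coact')
    (σ : H ≃* H) (r : G' → H) (v : G' → G)
    (p1 : ∀ (g' : G') (h : H), σ (act' g' h) * r (coact' g' h) = r g' * act (v g') (σ h))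
    (p2 : ∀ (g' : G') (h : H), v (coact' g' h) = coact (v g') (σ h))
    (p3 : ∀ g₁' g₂' : G', r (g₁' * g₂') = r g₁' * act (v g₁') (r g₂'))
    (p4 : ∀ g₁' g₂' : G', v (g₁' * g₂') = coact (v g₁') (r g₂') * v g₂') :
    Function.Bijective (fun x : Bicross act' coact' =>
      (⟨σ x.h * r x.g, v x.g⟩ : Bicross act coact)) ↔ Function.Bijective v := by
  constructor
  · rintro ⟨hinj, hsurj⟩
    constructor
    · intro g₁ g₂ hv
      have := hinj (a₁ := ⟨σ.symm (r g₁)⁻¹, g₁⟩) (a₂ := ⟨σ.symm (r g₂)⁻¹, g₂⟩) (by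
        exact Bicross.ext (by simp) hv)
      exact congrArg Bicross.g this
    · intro g
      obtain ⟨x, hx⟩ := hsurj ⟨1, g⟩
      exact ⟨x.g, congrArg Bicross.g hx⟩
  · rintro ⟨hinj, hsurj⟩
    constructor
    · rintro ⟨h₁, g₁⟩ ⟨h₂, g₂⟩ he
      simp only [Bicross.mk.injEq] at he
      obtain ⟨he1, he2⟩ := he
      have hg : g₁ = g₂ := hinj he2
      subst hg
      have : σ h₁ = σ h₂ := mul_right_cancel he1
      exact Bicross.ext (σ.injective this) rfl
    · rintro ⟨a, g⟩
      obtain ⟨g', hg'⟩ := hsurj g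
      exact ⟨⟨σ.symm (a * (r g')⁻¹), g'⟩, by
        simp [Bicross.mk.injEq, hg']⟩
end

section
/- Let (H, G, α, β) be a matched pair of groups and (σ, v, r) a triple where σ ∈ Aut(H), v : G → G is a bijection, r : G → H is a map, v(1_G) = 1_G, r(1_G) = 1_H, and r(v⁻¹((v(g₁) ◁ r(g₂))·v(g₂))) = r(g₁)·(v(g₁) ▷ r(g₂)) for all g₁, g₂ ∈ G. Then the operation g₁ * g₂ := v⁻¹((v(g₁) ◁ r(g₂))·v(g₂)) makes the set G into a group with unit 1_G. -/
/-- Given a matched pair `(H, G, act, coact)` and a triple `(σ, v, r)` with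
`σ ∈ Aut(H)`, `v : G → G` bijective, `r : G → H`, `v(1) = 1`, `r(1) = 1` and
`r(v⁻¹((v(g₁) ◁ r(g₂))·v(g₂))) = r(g₁)·(v(g₁) ▷ r(g₂))`, the operation
`g₁ * g₂ := v⁻¹((v(g₁) ◁ r(g₂))·v(g₂))` makes the set `G` a group with unit `1_G`. -/
theorem deformed_mul_group {H G : Type*} [Group H] [Group G]
    {act : G → H → H} {coact : G → H → G} (mp : IsMatchedPair act coact)
    (σ : H ≃* H) (v : G ≃ G) (r : G → H)
    (hv1 : v 1 = 1) (hr1 : r 1 = 1)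
    (hcr : ∀ g₁ g₂ : G,
      r (v.symm (coact (v g₁) (r g₂) * v g₂)) = r g₁ * act (v g₁) (r g₂)) :
    let mulStar : G → G → G := fun g₁ g₂ => v.symm (coact (v g₁) (r g₂) * v g₂)
    (∀ g₁ g₂ g₃ : G, mulStar (mulStar g₁ g₂) g₃ = mulStar g₁ (mulStar g₂ g₃)) ∧
      (∀ g : G, mulStar 1 g = g) ∧ (∀ g : G, mulStar g 1 = g) ∧
      (∀ g : G, ∃ g' : G, mulStar g' g = 1 ∧ mulStar g g' = 1) := by
  intro mulStar
  have hv1' : v.symm 1 = 1 := by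
    have := v.symm_apply_apply 1; rwa [hv1] at this
  -- associativity
  have hassoc : ∀ g₁ g₂ g₃ : G, mulStar (mulStar g₁ g₂) g₃ = mulStar g₁ (mulStar g₂ g₃) := by
    intro a b c
    show v.symm (coact (v (v.symm (coact (v a) (r b) * v b))) (r c) * v c)
      = v.symm (coact (v a) (r (v.symm (coact (v b) (r c) * v c)))
        * v (v.symm (coact (v b) (r c) * v c)))
    rw [v.apply_symm_apply, v.apply_symm_apply, hcr, mp.coact_mul, mp.mul_coact, mul_assoc]
  have hone : ∀ g : G, mulStar 1 g = g := by
    intro g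
    show v.symm (coact (v 1) (r g) * v g) = g
    rw [hv1, mp.one_coact, one_mul, v.symm_apply_apply]
  have hone' : ∀ g : G, mulStar g 1 = g := by
    intro g
    show v.symm (coact (v g) (r 1) * v 1) = g
    rw [hv1, hr1, mp.coact_one, mul_one, v.symm_apply_apply]
  -- left inverse
  have hlinv : ∀ g : G, ∃ g' : G, mulStar g' g = 1 := by
    intro g
    refine ⟨v.symm (coact ((v g)⁻¹) ((r g)⁻¹)), ?_⟩
    show v.symm (coact (v (v.symm (coact ((v g)⁻¹) ((r g)⁻¹)))) (r g) * v g) = 1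
    rw [v.apply_symm_apply, ← mp.coact_mul, inv_mul_cancel, mp.coact_one,
      inv_mul_cancel, hv1']
  refine ⟨hassoc, hone, hone', fun g => ?_⟩
  obtain ⟨g', hg'⟩ := hlinv g
  obtain ⟨g'', hg''⟩ := hlinv g'
  have hr : mulStar g g' = 1 := by
    calc mulStar g g' = mulStar (mulStar g'' g') (mulStar g g') := by rw [hg'', hone]
    _ = mulStar g'' (mulStar g' (mulStar g g')) := by rw [hassoc]
    _ = mulStar g'' (mulStar (mulStar g' g) g') := by rw [hassoc]
    _ = 1 := by rw [hg', hone, hg'']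
  exact ⟨g', hg', hr⟩
end

section
/- (Deformation of a matched pair.) Let (H, G, α, β) be a matched pair of groups and (σ, v, r) a triple where σ ∈ Aut(H), v : G → G is a bijection, r : G → H is a map, v(1_G) = 1_G, r(1_G) = 1_H, and r(v⁻¹((v(g₁) ◁ r(g₂))·v(g₂))) = r(g₁)·(v(g₁) ▷ r(g₂)) for all g₁, g₂ ∈ G. Let (G, *) be the group with multiplication g₁ * g₂ := v⁻¹((v(g₁) ◁ r(g₂))·v(g₂)), and define β' : G × H → G and α' : G × H → H by g ◁' h := v⁻¹(v(g) ◁ σ(h)) and g ▷' h := σ⁻¹(r(g))·σ⁻¹(v(g) ▷ σ(h))·σ⁻¹(r(v⁻¹(v(g) ◁ σ(h)))⁻¹). Then (H, (G, *), α', β') is a matched pair of groups and ψ : H ⋈' (G, *) → H ⋈ G, ψ(h, g) := (σ(h)r(g), v(g)), is an isomorphism of groups satisfying ψ(h, 1_G) = (σ(h), 1_G) for all h ∈ H. -/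
/-- **Deformation of a matched pair.** Given a matched pair `(H, G, act, coact)`
and a triple `(σ, v, r)` with `σ ∈ Aut(H)`, `v : G → G` bijective, `r : G → H`,
`v(1) = 1`, `r(1) = 1` and `r(v⁻¹((v(g₁) ◁ r(g₂))·v(g₂))) = r(g₁)·(v(g₁) ▷ r(g₂))`:
the set `G` with the deformed multiplication `*` is a group, the deformed actions
`α'`, `β'` make `(H, (G, *), α', β')` a matched pair, and
`ψ(h, g) = (σ(h)r(g), v(g))` is an isomorphism of groups
`H ⋈' (G, *) → H ⋈ G` with `ψ(h, 1) = (σ(h), 1)`. -/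
theorem matchedPair_deformation {H G : Type*} [Group H] [Group G]
    {act : G → H → H} {coact : G → H → G} (mp : IsMatchedPair act coact)
    (σ : H ≃* H) (v : G ≃ G) (r : G → H)
    (hv1 : v 1 = 1) (hr1 : r 1 = 1)
    (hcr : ∀ g₁ g₂ : G,
      r (v.symm (coact (v g₁) (r g₂) * v g₂)) = r g₁ * act (v g₁) (r g₂)) :
    let mulStar : G → G → G := fun g₁ g₂ => v.symm (coact (v g₁) (r g₂) * v g₂)
    let coact' : G → H → G := fun g h => v.symm (coact (v g) (σ h))
    let act' : G → H → H := fun g h =>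
      σ.symm (r g) * σ.symm (act (v g) (σ h)) *
        σ.symm ((r (v.symm (coact (v g) (σ h))))⁻¹)
    let ψ : H × G → H × G := fun x => (σ x.1 * r x.2, v x.2)
    -- (G, *) is a group with unit 1
    ((∀ g₁ g₂ g₃ : G, mulStar (mulStar g₁ g₂) g₃ = mulStar g₁ (mulStar g₂ g₃)) ∧
      (∀ g : G, mulStar 1 g = g) ∧ (∀ g : G, mulStar g 1 = g) ∧
      (∀ g : G, ∃ g' : G, mulStar g' g = 1 ∧ mulStar g g' = 1)) ∧
    -- (H, (G, *), act', coact') is a matched pair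
    ((∀ h : H, act' 1 h = h) ∧
      (∀ (g₁ g₂ : G) (h : H), act' (mulStar g₁ g₂) h = act' g₁ (act' g₂ h)) ∧
      (∀ g : G, coact' g 1 = g) ∧
      (∀ (g : G) (h₁ h₂ : H), coact' g (h₁ * h₂) = coact' (coact' g h₁) h₂) ∧
      (∀ (g : G) (h₁ h₂ : H),
        act' g (h₁ * h₂) = act' g h₁ * act' (coact' g h₁) h₂) ∧
      (∀ (g₁ g₂ : G) (h : H),
        coact' (mulStar g₁ g₂) h = mulStar (coact' g₁ (act' g₂ h)) (coact' g₂ h))) ∧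
    -- ψ is an isomorphism of groups H ⋈' (G,*) → H ⋈ G with ψ(h,1) = (σ h, 1)
    ((∀ x y : H × G,
        ψ (x.1 * act' x.2 y.1, mulStar (coact' x.2 y.1) y.2) =
          bicrossMul act coact (ψ x) (ψ y)) ∧
      Function.Bijective ψ ∧ ∀ h : H, ψ (h, 1) = (σ h, 1)) := by

  intro mulStar coact' act' ψ
  have hv1' : v.symm (1 : G) = 1 := by apply v.injective; rw [v.apply_symm_apply, hv1]
  have hK1 : ∀ g h, v (coact' g h) = coact (v g) (σ h) := fun g h => v.apply_symm_apply _
  have hK2 : ∀ g₁ g₂, r (mulStar g₁ g₂) = r g₁ * act (v g₁) (r g₂) := hcr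
  have hK3 : ∀ g₁ g₂, v (mulStar g₁ g₂) = coact (v g₁) (r g₂) * v g₂ :=
    fun _ _ => v.apply_symm_apply _
  have bassoc : ∀ x y z : H × G,
      bicrossMul act coact (bicrossMul act coact x y) z =
        bicrossMul act coact x (bicrossMul act coact y z) := by
    intro x y z
    simp only [bicrossMul, mp.act_mul, mp.mul_act, mp.coact_mul, mp.mul_coact, mul_assoc]
  have mulStar_one : ∀ g, mulStar g 1 = g := by
    intro g
    show v.symm (coact (v g) (r 1) * v 1) = g
    rw [hr1, hv1, mp.coact_one, mul_one, v.symm_apply_apply]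
  have one_mulStar : ∀ g, mulStar 1 g = g := by
    intro g
    show v.symm (coact (v 1) (r g) * v g) = g
    rw [hv1, mp.one_coact, one_mul, v.symm_apply_apply]
  have mulStar_assoc : ∀ a b c, mulStar (mulStar a b) c = mulStar a (mulStar b c) := by
    intro a b c
    apply v.injective
    simp only [hK3, hK2, mp.mul_coact, mp.coact_mul, mul_assoc]
  have left_inv : ∀ g, mulStar (v.symm (coact (v g)⁻¹ (r g)⁻¹)) g = 1 := by
    intro g
    show v.symm (coact (v (v.symm (coact (v g)⁻¹ (r g)⁻¹))) (r g) * v g) = 1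
    rw [v.apply_symm_apply, ← mp.coact_mul, inv_mul_cancel, mp.coact_one,
      inv_mul_cancel, hv1']
  have mulStar_inv : ∀ g, ∃ g', mulStar g' g = 1 ∧ mulStar g g' = 1 := by
    intro g
    set g' := v.symm (coact (v g)⁻¹ (r g)⁻¹) with hg'
    refine ⟨g', left_inv g, ?_⟩
    set g'' := v.symm (coact (v g')⁻¹ (r g')⁻¹) with hg''
    have h1 := left_inv g
    have h2 := left_inv g'
    calc mulStar g g' = mulStar 1 (mulStar g g') := (one_mulStar _).symm
      _ = mulStar (mulStar g'' g') (mulStar g g') := by rw [h2]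
      _ = mulStar g'' (mulStar g' (mulStar g g')) := by rw [mulStar_assoc]
      _ = mulStar g'' (mulStar (mulStar g' g) g') := by rw [mulStar_assoc]
      _ = mulStar g'' (mulStar 1 g') := by rw [h1]
      _ = 1 := by rw [one_mulStar]; exact h2
  have one_act' : ∀ h : H, act' 1 h = h := by
    intro h
    show σ.symm (r 1) * σ.symm (act (v 1) (σ h)) *
        σ.symm ((r (v.symm (coact (v 1) (σ h))))⁻¹) = h
    rw [hv1, mp.one_act, mp.one_coact, hv1', hr1, map_one, inv_one, map_one, mul_one,
      one_mul, σ.symm_apply_apply]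
  have act'_one : ∀ g : G, act' g 1 = 1 := by
    intro g
    show σ.symm (r g) * σ.symm (act (v g) (σ 1)) *
        σ.symm ((r (v.symm (coact (v g) (σ 1))))⁻¹) = 1
    rw [map_one, mp.act_one, mp.coact_one, v.symm_apply_apply, map_one, mul_one,
      map_inv, mul_inv_cancel]
  have coact'_one : ∀ g : G, coact' g 1 = g := by
    intro g
    show v.symm (coact (v g) (σ 1)) = g
    rw [map_one, mp.coact_one, v.symm_apply_apply]
  have one_coact' : ∀ h : H, coact' 1 h = 1 := by
    intro h
    show v.symm (coact (v 1) (σ h)) = 1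
    rw [hv1, mp.one_coact, hv1']
  have coact'_mul : ∀ (g : G) (h₁ h₂ : H),
      coact' g (h₁ * h₂) = coact' (coact' g h₁) h₂ := by
    intro g h₁ h₂
    show v.symm (coact (v g) (σ (h₁ * h₂))) =
      v.symm (coact (v (v.symm (coact (v g) (σ h₁)))) (σ h₂))
    rw [map_mul, mp.coact_mul, v.apply_symm_apply]
  have hom : ∀ x y : H × G,
      ψ (x.1 * act' x.2 y.1, mulStar (coact' x.2 y.1) y.2) =
        bicrossMul act coact (ψ x) (ψ y) := by
    rintro ⟨h₁, g₁⟩ ⟨h₂, g₂⟩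
    refine Prod.ext ?_ ?_
    · show σ (h₁ * (σ.symm (r g₁) * σ.symm (act (v g₁) (σ h₂)) *
          σ.symm ((r (coact' g₁ h₂))⁻¹))) * r (mulStar (coact' g₁ h₂) g₂) =
        σ h₁ * r g₁ * act (v g₁) (σ h₂ * r g₂)
      rw [hK2, hK1, map_mul, map_mul, map_mul, σ.apply_symm_apply, σ.apply_symm_apply,
        σ.apply_symm_apply, mp.act_mul]
      simp only [mul_assoc, inv_mul_cancel_left]
    · show v (mulStar (coact' g₁ h₂) g₂) = coact (v g₁) (σ h₂ * r g₂) * v g₂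
      rw [hK3, hK1, mp.coact_mul]
  have hbij : Function.Bijective ψ := by
    apply Function.bijective_iff_has_inverse.mpr
    refine ⟨fun p => (σ.symm (p.1 * (r (v.symm p.2))⁻¹), v.symm p.2), ?_, ?_⟩
    · rintro ⟨h, g⟩
      show (σ.symm (σ h * r g * (r (v.symm (v g)))⁻¹), v.symm (v g)) = (h, g)
      simp
    · rintro ⟨a, b⟩
      show (σ (σ.symm (a * (r (v.symm b))⁻¹)) * r (v.symm b), v (v.symm b)) = (a, b)
      simp
  have keyG : ∀ g₁ g₂, ψ (1, mulStar g₁ g₂) =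
      bicrossMul act coact (ψ (1, g₁)) (ψ (1, g₂)) := by
    intro g₁ g₂
    show ((σ 1 * r (mulStar g₁ g₂) : H), v (mulStar g₁ g₂)) =
      bicrossMul act coact (σ 1 * r g₁, v g₁) (σ 1 * r g₂, v g₂)
    simp [bicrossMul, hK2, hK3]
  have keyH : ∀ h₁ h₂ : H, ψ (h₁ * h₂, 1) =
      bicrossMul act coact (ψ (h₁, 1)) (ψ (h₂, 1)) := by
    intro h₁ h₂
    show ((σ (h₁ * h₂) * r 1 : H), v 1) =
      bicrossMul act coact (σ h₁ * r 1, v 1) (σ h₂ * r 1, v 1)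
    simp [bicrossMul, hr1, hv1, mp.one_act, mp.one_coact]
  have key : ∀ g h, ψ (act' g h, coact' g h) =
      bicrossMul act coact (ψ (1, g)) (ψ (h, 1)) := by
    intro g h
    have e := hom (1, g) (h, 1)
    simpa only [one_mul, mulStar_one] using e
  have pair1 : ∀ (g₁ g₂ : G) (h : H),
      (act' (mulStar g₁ g₂) h, coact' (mulStar g₁ g₂) h) =
        (act' g₁ (act' g₂ h), mulStar (coact' g₁ (act' g₂ h)) (coact' g₂ h)) := by
    intro g₁ g₂ h
    apply hbij.1
    have e := hom (1, g₁) (act' g₂ h, coact' g₂ h)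
    simp only [one_mul] at e
    rw [key, e, key g₂ h, keyG, bassoc]
  have pair2 : ∀ (g : G) (h₁ h₂ : H),
      (act' g (h₁ * h₂), coact' g (h₁ * h₂)) =
        (act' g h₁ * act' (coact' g h₁) h₂, coact' (coact' g h₁) h₂) := by
    intro g h₁ h₂
    apply hbij.1
    have e := hom (act' g h₁, coact' g h₁) (h₂, 1)
    simp only [mulStar_one] at e
    rw [key, e, key g h₁, keyH, bassoc]
  have psi_one : ∀ h : H, ψ (h, 1) = (σ h, 1) := by
    intro h
    show ((σ h * r 1 : H), v 1) = (σ h, 1)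
    rw [hr1, hv1, mul_one]
  exact ⟨⟨mulStar_assoc, one_mulStar, mulStar_one, mulStar_inv⟩,
    ⟨one_act', fun g₁ g₂ h => congrArg Prod.fst (pair1 g₁ g₂ h), coact'_one, coact'_mul,
      fun g h₁ h₂ => congrArg Prod.fst (pair2 g h₁ h₂),
      fun g₁ g₂ h => congrArg Prod.snd (pair1 g₁ g₂ h)⟩,
    ⟨hom, hbij, psi_one⟩⟩
end

section
/- Let H and G be two fixed groups and define, on the set MP(H,G) of all pairs (α, β) such that (H, G, α, β) is a matched pair, the relation (α, β) ≈₁ (α', β') to mean: there exist maps r : G → H and v : G → G with v bijective such that (s1) (g ▷' h)·r(g ◁' h) = r(g)·(v(g) ▷ h), (s2) v(g ◁' h) = v(g) ◁ h, (s3) r(g₁g₂) = r(g₁)·(v(g₁) ▷ r(g₂)), and (s4) v(g₁g₂) = (v(g₁) ◁ r(g₂))·v(g₂) for all h ∈ H, g, g₁, g₂ ∈ G. Then (α, β) ≈₁ (α', β') if and only if there exists a group isomorphism ψ : H ⋈' G → H ⋈ G between the corresponding bicrossed products with ψ(h, 1_G) = (h, 1_G) for all h ∈ H; in particular ≈₁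 is an equivalence relation on MP(H,G). -/
/-- The set `MP(H, G)` of all pairs `(α, β)` such that `(H, G, α, β)` is a matched
pair of groups. -/
def MP (H G : Type*) [Group H] [Group G] : Type _ :=
  {p : (G → H → H) × (G → H → G) // IsMatchedPair p.1 p.2}

/-- The relation `(α, β) ≈₁ (α', β')`: there exist maps `r : G → H` and a bijection
`v : G → G` satisfying the compatibility conditions (s1)–(s4). -/
def Rel1 {H G : Type*} [Group H] [Group G]
    (act : G → H → H) (coact : G → H → G)
    (act' : G → H → H) (coact' : G → H → G) : Prop :=
  ∃ (r : G → H) (v : G → G), Function.Bijective v ∧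
    (∀ (g : G) (h : H), act' g h * r (coact' g h) = r g * act (v g) h) ∧
    (∀ (g : G) (h : H), v (coact' g h) = coact (v g) h) ∧
    (∀ g₁ g₂ : G, r (g₁ * g₂) = r g₁ * act (v g₁) (r g₂)) ∧
    (∀ g₁ g₂ : G, v (g₁ * g₂) = coact (v g₁) (r g₂) * v g₂)

theorem rel1_key {H G : Type*} [Group H] [Group G]
    (act : G → H → H) (coact : G → H → G) (act' : G → H → H) (coact' : G → H → G)
    (mp : IsMatchedPair act coact) (mp' : IsMatchedPair act' coact') :
    Rel1 act coact act' coact' ↔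
      ∃ ψ : H × G → H × G,
        (∀ x y : H × G,
          ψ (bicrossMul act' coact' x y) = bicrossMul act coact (ψ x) (ψ y)) ∧
        Function.Bijective ψ ∧ ∀ h : H, ψ (h, 1) = (h, 1) := by
  constructor
  · rintro ⟨r, v, hv, s1, s2, s3, s4⟩
    -- r 1 = 1
    have hr1 : r 1 = 1 := by
      have h3 := s3 1 1
      rw [mul_one] at h3
      have hX : act (v 1) (r 1) = 1 := left_eq_mul.mp h3
      have := mp.mul_act (v 1)⁻¹ (v 1) (r 1)
      rw [inv_mul_cancel, mp.one_act, hX, mp.act_one] at this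
      exact this
    have hv1 : v 1 = 1 := by
      have h4 := s4 1 1
      rw [mul_one, hr1, mp.coact_one] at h4
      exact left_eq_mul.mp h4
    refine ⟨fun x => (x.1 * r x.2, v x.2), ?_, ?_, ?_⟩
    · rintro ⟨h₁, g₁⟩ ⟨h₂, g₂⟩
      simp only [bicrossMul]
      refine Prod.ext ?_ ?_
      · show h₁ * act' g₁ h₂ * r (coact' g₁ h₂ * g₂)
          = h₁ * r g₁ * act (v g₁) (h₂ * r g₂)
        rw [s3, s2, mp.act_mul, mul_assoc, ← mul_assoc (act' g₁ h₂), s1]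
        simp [mul_assoc]
      · show v (coact' g₁ h₂ * g₂) = coact (v g₁) (h₂ * r g₂) * v g₂
        rw [s4, s2, mp.coact_mul]
    · constructor
      · rintro ⟨h₁, g₁⟩ ⟨h₂, g₂⟩ heq
        simp only [Prod.mk.injEq] at heq
        obtain ⟨e1, e2⟩ := heq
        have hg : g₁ = g₂ := hv.injective e2
        subst hg
        exact Prod.ext (mul_right_cancel e1) rfl
      · rintro ⟨a, b⟩
        obtain ⟨g, hg⟩ := hv.surjective b
        exact ⟨(a * (r g)⁻¹, g), by simp [hg]⟩
    · intro h
      simp [hr1, hv1]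
  · rintro ⟨ψ, hmul, hbij, hH⟩
    set r : G → H := fun g => (ψ (1, g)).1 with hr
    set v : G → G := fun g => (ψ (1, g)).2 with hvdef
    have hψ1 : ∀ g, ψ (1, g) = (r g, v g) := fun g => rfl
    have hψ : ∀ (h : H) (g : G), ψ (h, g) = (h * r g, v g) := by
      intro h g
      have hx : (h, g) = bicrossMul act' coact' (h, 1) ((1 : H), g) := by
        simp [bicrossMul, mp'.one_act, mp'.coact_one]
      rw [hx, hmul, hH, hψ1]
      simp [bicrossMul, mp.one_act, mp.one_coact]
    have hvbij : Function.Bijective v := by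
      constructor
      · intro g₁ g₂ he
        have : ψ (r g₁ * (r g₂)⁻¹, g₂) = ψ (1, g₁) := by
          rw [hψ, hψ, one_mul, inv_mul_cancel_right, he]
        exact (congrArg Prod.snd (hbij.injective this)).symm
      · intro b
        obtain ⟨⟨h, g⟩, hge⟩ := hbij.surjective ((1 : H), b)
        refine ⟨g, ?_⟩
        rw [hψ] at hge
        exact congrArg Prod.snd hge
    have key12 : ∀ (g : G) (h : H),
        (act' g h * r (coact' g h), v (coact' g h))
          = (r g * act (v g) h, coact (v g) h) := by
      intro g h
      have := hmul ((1 : H), g) (h, 1)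
      simp only [bicrossMul, one_mul, mul_one] at this
      rw [hψ, hψ1, hH] at this
      simpa [bicrossMul, mul_one] using this
    have key34 : ∀ g₁ g₂ : G,
        (r (g₁ * g₂), v (g₁ * g₂))
          = (r g₁ * act (v g₁) (r g₂), coact (v g₁) (r g₂) * v g₂) := by
      intro g₁ g₂
      have := hmul ((1 : H), g₁) ((1 : H), g₂)
      simp only [bicrossMul, one_mul, mp'.act_one, mp'.coact_one] at this
      rw [hψ1, hψ1, hψ1] at this
      simpa [bicrossMul, mul_one] using this
    exact ⟨r, v, hvbij,
      fun g h => congrArg Prod.fst (key12 g h),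
      fun g h => congrArg Prod.snd (key12 g h),
      fun g₁ g₂ => congrArg Prod.fst (key34 g₁ g₂),
      fun g₁ g₂ => congrArg Prod.snd (key34 g₁ g₂)⟩

/-- **First Schreier type theorem, key step.** `(α, β) ≈₁ (α', β')` holds if and
only if there exists an isomorphism of groups `ψ : H ⋈' G → H ⋈ G` between the
corresponding bicrossed products with `ψ(h, 1) = (h, 1)` for all `h ∈ H`; in
particular `≈₁` is an equivalence relation on `MP(H, G)`. -/
theorem rel1_iff_iso_fixing_H {H G : Type*} [Group H] [Group G] :
    (∀ (act : G → H → H) (coact : G → H → G) (act' : G → H → H) (coact' : G → H → G),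
      IsMatchedPair act coact → IsMatchedPair act' coact' →
      (Rel1 act coact act' coact' ↔
        ∃ ψ : H × G → H × G,
          (∀ x y : H × G,
            ψ (bicrossMul act' coact' x y) = bicrossMul act coact (ψ x) (ψ y)) ∧
          Function.Bijective ψ ∧ ∀ h : H, ψ (h, 1) = (h, 1))) ∧
    Equivalence (fun p q : MP H G => Rel1 p.val.1 p.val.2 q.val.1 q.val.2) := by
  refine ⟨fun act coact act' coact' mp mp' => rel1_key act coact act' coact' mp mp', ?_⟩
  constructor
  · rintro ⟨⟨a, c⟩, mp⟩
    have mpa : IsMatchedPair a c := mp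
    exact ⟨fun _ => 1, id, Function.bijective_id,
      fun g h => by simp, fun g h => rfl,
      fun g₁ g₂ => by simp [mpa.act_one g₁], fun g₁ g₂ => by simp [mpa.coact_one g₁]⟩
  · rintro ⟨⟨a, c⟩, mp⟩ ⟨⟨a', c'⟩, mp'⟩ hpq
    obtain ⟨ψ, hmul, hbij, hH⟩ := (rel1_key a c a' c' mp mp').mp hpq
    refine (rel1_key a' c' a c mp' mp).mpr ?_
    set e := Equiv.ofBijective ψ hbij with he
    refine ⟨e.symm, ?_, e.symm.bijective, ?_⟩
    · intro x y
      apply e.injective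
      show ψ _ = ψ _
      rw [hmul]
      have : ∀ z, ψ (e.symm z) = z := fun z => e.apply_symm_apply z
      rw [this, this, this]
    · intro h
      have h2 : e (h, 1) = (h, 1) := hH h
      apply e.injective
      rw [e.apply_symm_apply, h2]
  · rintro ⟨⟨a, c⟩, mp⟩ ⟨⟨a', c'⟩, mp'⟩ ⟨⟨a'', c''⟩, mp''⟩ hpq hqs
    obtain ⟨ψ, hmulψ, hbijψ, hHψ⟩ := (rel1_key a c a' c' mp mp').mp hpq
    obtain ⟨χ, hmulχ, hbijχ, hHχ⟩ := (rel1_key a' c' a'' c'' mp' mp'').mp hqs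
    refine (rel1_key a c a'' c'' mp mp'').mpr
      ⟨ψ ∘ χ, ?_, hbijψ.comp hbijχ, ?_⟩
    · intro x y
      simp only [Function.comp_apply, hmulχ, hmulψ]
    · intro h
      simp only [Function.comp_apply, hHχ, hHψ]
end

section
/- Let H, G be groups, let α : G × H → H be an action of G on H as group automorphisms (written g ▷ h), and let (H, G, α', β') be a matched pair (actions ▷', ◁'). The following are equivalent: (1) there exists a group isomorphism ψ : H ⋈' G → H ⋉_α G with ψ(h, 1_G) = (h, 1_G) for all h ∈ H; (2) the action β' is trivial (g ◁' h = g for all g, h) and there exists a pair (r, v) with v ∈ Aut(G) and r : G → H a map such that r(g₁g₂) = r(g₁)·(v(g₁) ▷ r(g₂)) for all g₁, g₂ ∈ G, and g ▷' h = r(g)·(v(g) ▷ h)·r(g)⁻¹ for all g ∈ G, h ∈ H. In this case the isomorphism is given by ψ(h, g) = (h r(g), v(g)). -/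
/-- Auxiliary: the explicit map `ψ(h,g) = (h r(g), v(g))` is a fixing-`H`
isomorphism whenever `β'` is trivial, `r` satisfies the cocycle condition and
`act'` has the stated form. -/
theorem bicross_aux {H G : Type*} [Group H] [Group G]
    {act : G → H → H} {act' : G → H → H} {coact' : G → H → G}
    (h1 : ∀ h : H, act 1 h = h)
    (h3 : ∀ (g : G) (h₁ h₂ : H), act g (h₁ * h₂) = act g h₁ * act g h₂)
    (v : G ≃* G) (r : G → H)
    (hco : ∀ (g : G) (h : H), coact' g h = g)
    (hr : ∀ g₁ g₂ : G, r (g₁ * g₂) = r g₁ * act (v g₁) (r g₂))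
    (ha : ∀ (g : G) (h : H), act' g h = r g * act (v g) h * (r g)⁻¹) :
    ((∀ x y : H × G,
        (fun x : H × G => (x.1 * r x.2, v x.2)) (bicrossMul act' coact' x y) =
          bicrossMul act (fun g _ => g)
            ((fun x : H × G => (x.1 * r x.2, v x.2)) x)
            ((fun x : H × G => (x.1 * r x.2, v x.2)) y)) ∧
      Function.Bijective (fun x : H × G => (x.1 * r x.2, v x.2)) ∧
      ∀ h : H, (fun x : H × G => (x.1 * r x.2, v x.2)) (h, 1) = (h, 1)) := by
  have hr1 : r 1 = 1 := by
    have := hr 1 1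
    rw [one_mul, map_one, h1] at this
    exact left_eq_mul.mp this
  refine ⟨?_, ?_, ?_⟩
  · rintro ⟨x1, x2⟩ ⟨y1, y2⟩
    simp only [bicrossMul, hco, hr, ha, h3, map_mul]
    refine Prod.ext ?_ rfl
    group
  · constructor
    · rintro ⟨x1, x2⟩ ⟨y1, y2⟩ hxy
      simp only [Prod.mk.injEq] at hxy
      have h2' : x2 = y2 := v.injective hxy.2
      subst h2'
      exact Prod.ext (mul_right_cancel hxy.1) rfl
    · rintro ⟨y1, y2⟩
      exact ⟨(y1 * (r (v.symm y2))⁻¹, v.symm y2), by simp⟩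
  · intro h
    simp [hr1]

/-- A bicrossed product `H ⋈' G` is isomorphic, by an isomorphism fixing `H`, to a
left semidirect product `H ⋉_α G` (for `α` an action of `G` on `H` as group
automorphisms) if and only if `β'` is trivial and there is a pair `(r, v)` with
`v ∈ Aut(G)` and `r : G → H` with `r(g₁g₂) = r(g₁)(v(g₁) ▷ r(g₂))` such that
`g ▷' h = r(g)(v(g) ▷ h)r(g)⁻¹`; in this case the isomorphism is
`ψ(h, g) = (h r(g), v(g))`. -/
theorem bicross_iso_leftSemidirect_iff {H G : Type*} [Group H] [Group G]
    {act : G → H → H} {act' : G → H → H} {coact' : G → H → G}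
    (h1 : ∀ h : H, act 1 h = h)
    (h2 : ∀ (g₁ g₂ : G) (h : H), act (g₁ * g₂) h = act g₁ (act g₂ h))
    (h3 : ∀ (g : G) (h₁ h₂ : H), act g (h₁ * h₂) = act g h₁ * act g h₂)
    (mp' : IsMatchedPair act' coact') :
    ((∃ ψ : H × G → H × G,
        (∀ x y : H × G,
          ψ (bicrossMul act' coact' x y) =
            bicrossMul act (fun g _ => g) (ψ x) (ψ y)) ∧
        Function.Bijective ψ ∧ ∀ h : H, ψ (h, 1) = (h, 1)) ↔
      ((∀ (g : G) (h : H), coact' g h = g) ∧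
        ∃ (v : G ≃* G) (r : G → H),
          (∀ g₁ g₂ : G, r (g₁ * g₂) = r g₁ * act (v g₁) (r g₂)) ∧
          (∀ (g : G) (h : H), act' g h = r g * act (v g) h * (r g)⁻¹))) ∧
    ∀ (v : G ≃* G) (r : G → H),
      (∀ (g : G) (h : H), coact' g h = g) →
      (∀ g₁ g₂ : G, r (g₁ * g₂) = r g₁ * act (v g₁) (r g₂)) →
      (∀ (g : G) (h : H), act' g h = r g * act (v g) h * (r g)⁻¹) →
      ((∀ x y : H × G,
          (fun x : H × G => (x.1 * r x.2, v x.2)) (bicrossMul act' coact' x y) =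
            bicrossMul act (fun g _ => g)
              ((fun x : H × G => (x.1 * r x.2, v x.2)) x)
              ((fun x : H × G => (x.1 * r x.2, v x.2)) y)) ∧
        Function.Bijective (fun x : H × G => (x.1 * r x.2, v x.2)) ∧
        ∀ h : H, (fun x : H × G => (x.1 * r x.2, v x.2)) (h, 1) = (h, 1)) := by
  constructor
  · constructor
    · rintro ⟨ψ, hhom, hbij, hH⟩
      set r : G → H := fun g => (ψ (1, g)).1 with hrdef
      set v : G → G := fun g => (ψ (1, g)).2 with hvdef
      have hψ : ∀ (h : H) (g : G), ψ (h, g) = (h * r g, v g) := by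
        intro h g
        have e1 : bicrossMul act' coact' (h, 1) (1, g) = (h, g) := by
          simp [bicrossMul, mp'.act_one, mp'.coact_one]
        have e2 := hhom (h, 1) (1, g)
        rw [e1, hH] at e2
        rw [e2, hrdef, hvdef]
        simp [bicrossMul, h1]
      have hr1 : r 1 = 1 ∧ v 1 = 1 := by
        have := hH 1
        constructor
        · simpa [hrdef] using congrArg Prod.fst this
        · simpa [hvdef] using congrArg Prod.snd this
      have vinj : Function.Injective v := by
        intro g₁ g₂ hv
        have e : ψ (r g₂ * (r g₁)⁻¹, g₁) = ψ (1, g₂) := by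
          rw [hψ, hψ, hv]; simp
        exact congrArg Prod.snd (hbij.1 e)
      have vsurj : Function.Surjective v := by
        intro g'
        obtain ⟨⟨h, g⟩, hx⟩ := hbij.2 (1, g')
        rw [hψ] at hx
        exact ⟨g, congrArg Prod.snd hx⟩
      have key : ∀ (g : G) (h : H),
          (act' g h * r (coact' g h), v (coact' g h)) = (r g * act (v g) h, v g) := by
        intro g h
        have e : bicrossMul act' coact' (1, g) (h, 1) = (act' g h, coact' g h) := by
          simp [bicrossMul]
        have e2 := hhom (1, g) (h, 1)
        rw [e, hψ, hψ, hψ] at e2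
        simpa [bicrossMul, hr1.1, hr1.2] using e2
      have hco : ∀ (g : G) (h : H), coact' g h = g := by
        intro g h
        injection key g h with e1 e2
        exact vinj e2
      have vmul : ∀ g₁ g₂ : G, v (g₁ * g₂) = v g₁ * v g₂ := by
        intro g₁ g₂
        have e : bicrossMul act' coact' (1, g₁) (1, g₂) = (1, g₁ * g₂) := by
          simp [bicrossMul, mp'.act_one, mp'.coact_one]
        have e2 := hhom (1, g₁) (1, g₂)
        rw [e, hψ, hψ, hψ] at e2
        simpa [bicrossMul] using congrArg Prod.snd e2
      have rmul : ∀ g₁ g₂ : G, r (g₁ * g₂) = r g₁ * act (v g₁) (r g₂) := by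
        intro g₁ g₂
        have e : bicrossMul act' coact' (1, g₁) (1, g₂) = (1, g₁ * g₂) := by
          simp [bicrossMul, mp'.act_one, mp'.coact_one]
        have e2 := hhom (1, g₁) (1, g₂)
        rw [e, hψ, hψ, hψ] at e2
        simpa [bicrossMul] using congrArg Prod.fst e2
      refine ⟨hco, ⟨{ Equiv.ofBijective v ⟨vinj, vsurj⟩ with map_mul' := vmul }, r, rmul, ?_⟩⟩
      intro g h
      injection key g h with e1 e2
      rw [hco] at e1
      show act' g h = r g * act (v g) h * (r g)⁻¹
      rw [← e1]
      group
    · rintro ⟨hco, v, r, hr, ha⟩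
      exact ⟨fun x : H × G => (x.1 * r x.2, v x.2),
        bicross_aux h1 h3 v r hco hr ha⟩
  · intro v r hco hr ha
    exact bicross_aux h1 h3 v r hco hr ha
end

section
/- Let H, G be groups, β : G × H → G a right action (written g ◁ h), and let (H, G, α', β) and (H, G, α, β) be two matched pairs sharing the same β (left actions written ▷' and ▷). Set Ker(β) := {h ∈ H | g ◁ h = g for all g ∈ G}. Then there is a one-to-one correspondence between group homomorphisms ψ : H ⋈' G → H ⋈ G satisfying ψ(h, 1_G) = (h, 1_G) for all h ∈ H and π_G ∘ ψ = π_G (where π_G : H × G → G is the projection), and maps r : G → Ker(β) satisfying (g ▷' h)·r(g ◁ h) = r(g)·(g ▷ h) and r(g₁g₂) = r(g₁)·(g₁ ▷ r(g₂)) for all g, g₁, g₂ ∈ G, h ∈ H; the correspondence is ψ(h, g) = (h r(g), g). Moreover every such ψ is an isomorphism of groups. -/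
/-- For two matched pairs `(H, G, α', β)` and `(H, G, α, β)` sharing the same
right action `β`, there is a one-to-one correspondence between group homomorphisms
`ψ : H ⋈' G → H ⋈ G` with `ψ(h, 1) = (h, 1)` and `π_G ∘ ψ = π_G`, and maps
`r : G → Ker(β)` satisfying `(g ▷' h)r(g ◁ h) = r(g)(g ▷ h)` and
`r(g₁g₂) = r(g₁)(g₁ ▷ r(g₂))`; the correspondence is `ψ(h, g) = (h r(g), g)` and
every such `ψ` is an isomorphism of groups. -/
theorem bicross_hom_fixing_H_and_G_correspondence {H G : Type*} [Group H] [Group G]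
    {act : G → H → H} {act' : G → H → H} {coact : G → H → G}
    (mp' : IsMatchedPair act' coact) (mp : IsMatchedPair act coact) :
    (∀ r : G → H,
      (∀ g x : G, coact x (r g) = x) →
      (∀ (g : G) (h : H), act' g h * r (coact g h) = r g * act g h) →
      (∀ g₁ g₂ : G, r (g₁ * g₂) = r g₁ * act g₁ (r g₂)) →
      ((∀ x y : H × G,
          (fun x : H × G => (x.1 * r x.2, x.2)) (bicrossMul act' coact x y) =
            bicrossMul act coact ((fun x : H × G => (x.1 * r x.2, x.2)) x)
              ((fun x : H × G => (x.1 * r x.2, x.2)) y)) ∧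
        (∀ h : H, (fun x : H × G => (x.1 * r x.2, x.2)) ((h, 1) : H × G) = (h, 1)) ∧
        (∀ x : H × G, ((fun x : H × G => (x.1 * r x.2, x.2)) x).2 = x.2) ∧
        Function.Bijective (fun x : H × G => (x.1 * r x.2, x.2)))) ∧
    ∀ ψ : H × G → H × G,
      (∀ x y : H × G,
        ψ (bicrossMul act' coact x y) = bicrossMul act coact (ψ x) (ψ y)) →
      (∀ h : H, ψ (h, 1) = (h, 1)) →
      (∀ x : H × G, (ψ x).2 = x.2) →
      ∃! r : G → H,
        (∀ g x : G, coact x (r g) = x) ∧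
        (∀ (g : G) (h : H), act' g h * r (coact g h) = r g * act g h) ∧
        (∀ g₁ g₂ : G, r (g₁ * g₂) = r g₁ * act g₁ (r g₂)) ∧
        ∀ x : H × G, ψ x = (x.1 * r x.2, x.2) := by

  constructor
  · intro r hker hcomp hmul
    have hr1 : r 1 = 1 := by
      have := hmul 1 1
      rw [one_mul, mp.one_act] at this
      exact left_eq_mul.mp this
    refine ⟨?_, ?_, ?_, ?_⟩
    · intro x y
      simp only [bicrossMul]
      refine Prod.ext ?_ ?_
      · show x.1 * act' x.2 y.1 * r (coact x.2 y.1 * y.2) =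
          x.1 * r x.2 * act x.2 (y.1 * r y.2)
        rw [hmul, mp.act_mul]
        calc x.1 * act' x.2 y.1 * (r (coact x.2 y.1) * act (coact x.2 y.1) (r y.2))
            = x.1 * (act' x.2 y.1 * r (coact x.2 y.1)) * act (coact x.2 y.1) (r y.2) := by
              group
          _ = x.1 * (r x.2 * act x.2 y.1) * act (coact x.2 y.1) (r y.2) := by
              rw [hcomp]
          _ = x.1 * r x.2 * (act x.2 y.1 * act (coact x.2 y.1) (r y.2)) := by group
      · show coact x.2 y.1 * y.2 = coact x.2 (y.1 * r y.2) * y.2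
        rw [mp.coact_mul, hker]
    · intro h
      simp [hr1]
    · intro x; rfl
    · constructor
      · intro a b hab
        have hab' : ((a.1 * r a.2, a.2) : H × G) = (b.1 * r b.2, b.2) := hab
        have h2 : a.2 = b.2 := (Prod.ext_iff.mp hab').2
        have h1 : a.1 * r a.2 = b.1 * r b.2 := (Prod.ext_iff.mp hab').1
        rw [h2] at h1
        exact Prod.ext (mul_right_cancel h1) h2
      · intro y
        exact ⟨(y.1 * (r y.2)⁻¹, y.2), by simp⟩
  · intro ψ hhom hH hG
    set r : G → H := fun g => (ψ (1, g)).1 with hrdef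
    have hpsi : ∀ x : H × G, ψ x = (x.1 * r x.2, x.2) := by
      intro x
      have hx : bicrossMul act' coact (x.1, 1) (1, x.2) = x := by
        simp [bicrossMul, mp'.act_one, mp'.coact_one]
      have := hhom (x.1, 1) (1, x.2)
      rw [hx, hH x.1] at this
      rw [this]
      have h2 : (ψ (1, x.2)).2 = x.2 := hG (1, x.2)
      simp [bicrossMul, mp.one_act, mp.one_coact, h2, hrdef]
    have key : ∀ g₁ g₂ : G, (r g₁ * act g₁ (r g₂), coact g₁ (r g₂) * g₂)
        = (r (g₁ * g₂), g₁ * g₂) := by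
      intro g₁ g₂
      have hx : bicrossMul act' coact ((1 : H), g₁) ((1 : H), g₂) = (1, g₁ * g₂) := by
        simp [bicrossMul, mp'.act_one, mp'.coact_one]
      have := hhom (1, g₁) (1, g₂)
      rw [hx] at this
      rw [hpsi (1, g₁), hpsi (1, g₂), hpsi (1, g₁ * g₂)] at this
      simpa [bicrossMul] using this.symm
    have hker : ∀ g x : G, coact x (r g) = x := by
      intro g x
      have := congrArg Prod.snd (key x g)
      simpa using mul_right_cancel (a := coact x (r g)) (b := g) this
    have hmul : ∀ g₁ g₂ : G, r (g₁ * g₂) = r g₁ * act g₁ (r g₂) := by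
      intro g₁ g₂
      exact (congrArg Prod.fst (key g₁ g₂)).symm
    have hr1 : r 1 = 1 := by
      have := congrArg Prod.fst (hpsi ((1 : H), (1 : G)))
      rw [hH 1] at this
      simpa using this.symm
    have hcomp : ∀ (g : G) (h : H), act' g h * r (coact g h) = r g * act g h := by
      intro g h
      have := hhom ((1 : H), g) ((h : H), (1 : G))
      rw [hpsi, hpsi, hpsi] at this
      have h1 := congrArg Prod.fst this
      simpa [bicrossMul, mp'.coact_one, mp.coact_one, hr1] using h1
    refine ⟨r, ⟨hker, hcomp, hmul, hpsi⟩, ?_⟩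
    intro r' ⟨_, _, _, hpsi'⟩
    funext g
    have h1 := congrArg Prod.fst (hpsi' ((1 : H), g))
    have h2 := congrArg Prod.fst (hpsi ((1 : H), g))
    simp only at h1 h2
    rw [h1] at h2
    simpa using h2
end

section
/- Let H, G be groups, β : G × H → G an action of H on G as group automorphisms (written g ◁ h), and (H, G, α, β) a matched pair (left action written g ▷ h). Set Ker(β) := {h ∈ H | g ◁ h = g for all g ∈ G}. The following are equivalent: (1) there exists a group isomorphism ψ : H ⋈ G → H ⋊_β G satisfying ψ(h, 1_G) = (h, 1_G) for all h ∈ H and π_G ∘ ψ = π_G; (2) there exists a group homomorphism r : G → Ker(β) ≤ H such that g ▷ h = r(g)·h·r(g ◁ h)⁻¹ for all g ∈ G, h ∈ H. -/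
/-- For a matched pair `(H, G, α, β)` with `β` an action of `H` on `G` as group
automorphisms, the bicrossed product `H ⋈ G` is isomorphic to the right semidirect
product `H ⋊_β G` by an isomorphism `ψ` with `ψ(h, 1) = (h, 1)` and
`π_G ∘ ψ = π_G` if and only if there exists a group homomorphism
`r : G → Ker(β) ≤ H` such that `g ▷ h = r(g)·h·r(g ◁ h)⁻¹`. -/
theorem bicross_iso_rightSemidirect_fixing_H_and_G_iff {H G : Type*} [Group H] [Group G]
    {act : G → H → H} {coact : G → H → G}
    (h3 : ∀ (g₁ g₂ : G) (h : H), coact (g₁ * g₂) h = coact g₁ h * coact g₂ h)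
    (mp : IsMatchedPair act coact) :
    (∃ ψ : H × G → H × G,
        (∀ x y : H × G,
          ψ (bicrossMul act coact x y) =
            bicrossMul (fun (_ : G) (h : H) => h) coact (ψ x) (ψ y)) ∧
        Function.Bijective ψ ∧
        (∀ h : H, ψ (h, 1) = (h, 1)) ∧
        (∀ x : H × G, (ψ x).2 = x.2)) ↔
      ∃ r : G → H,
        (∀ g x : G, coact x (r g) = x) ∧
        (∀ g₁ g₂ : G, r (g₁ * g₂) = r g₁ * r g₂) ∧
        ∀ (g : G) (h : H), act g h = r g * h * (r (coact g h))⁻¹ := by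

  constructor
  · rintro ⟨ψ, hmul, hbij, hH, hG⟩
    set r : G → H := fun g => (ψ (1, g)).1 with hrdef
    have hψ2 : ∀ h g, (ψ (h, g)).2 = g := fun h g => hG (h, g)
    have key : ∀ h g, ψ (h, g) = (h * r g, g) := by
      intro h g
      have e := hmul (h, 1) (1, g)
      have hx : bicrossMul act coact (h, 1) (1, g) = (h, g) := by
        simp [bicrossMul, mp.one_act, mp.coact_one]
      rw [hx, hH] at e
      have h2 : ψ (1, g) = (r g, g) := Prod.ext rfl (hψ2 1 g)
      rw [h2] at e
      rw [e]
      simp [bicrossMul, mp.one_coact]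
    have hmain : ∀ x g : G, r (x * g) = r x * r g ∧ coact x (r g) = x := by
      intro x g
      have e := hmul (1, x) (1, g)
      have hx : bicrossMul act coact (1, x) (1, g) = (1, x * g) := by
        simp [bicrossMul, mp.act_one, mp.coact_one]
      rw [hx, key, key, key] at e
      simp only [bicrossMul, Prod.mk.injEq, one_mul] at e
      exact ⟨e.1, mul_right_cancel e.2.symm⟩
    refine ⟨r, fun g x => (hmain x g).2, fun g₁ g₂ => (hmain g₁ g₂).1, ?_⟩
    intro g h
    have e := hmul (1, g) (h, 1)
    have hx : bicrossMul act coact (1, g) (h, 1) = (act g h, coact g h) := by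
      simp [bicrossMul]
    rw [hx, key, key, hH] at e
    simp only [bicrossMul, Prod.mk.injEq, one_mul] at e
    exact eq_mul_inv_of_mul_eq e.1
  · rintro ⟨r, hrk, hrm, hact⟩
    have hr1 : r 1 = 1 := by
      have h := hrm 1 1
      rw [one_mul] at h
      exact left_eq_mul.mp h
    refine ⟨fun x => (x.1 * r x.2, x.2), ?_, ?_, ?_, fun x => rfl⟩
    · intro x y
      simp only [bicrossMul, Prod.mk.injEq]
      constructor
      · rw [hrm, hact]
        group
      · rw [mp.coact_mul, hrk]
    · exact Function.bijective_iff_has_inverse.mpr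
        ⟨fun x => (x.1 * (r x.2)⁻¹, x.2), fun x => by simp, fun x => by simp⟩
    · intro h
      simp [hr1]
end

section
/- Let n and m be positive integers and C_n = ⟨a⟩, C_m = ⟨b⟩ cyclic groups of orders n and m. There is a one-to-one correspondence between the set of all matched pairs (C_n, C_m, α, β) and the set of all pairs (θ, φ) of bijections θ : ℤ_n → ℤ_n and φ : ℤ_m → ℤ_m satisfying: θ(0) = 0 and φ(0) = 0; the order of θ (as a permutation) divides m and the order of φ divides n; θ^y(x + z) − θ^y(z) = θ^{φ^z(y)}(x) for all x, z ∈ ℤ_n and y ∈ ℤ_m; and φ^y(x + z) − φ^y(z) = φ^{θ^z(y)}(x) for all x, z ∈ ℤ_m and y ∈ ℤ_n. The correspondence is given by α(bⁱ, aˣ) = a^{θⁱ(x)} and β(b^y, a^j) = b^{φ^j(y)}. -/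
set_option linter.unusedSectionVars false

namespace MPAux
open Multiplicative

variable {H G : Type*} [Group H] [Group G] {act : G → H → H} {coact : G → H → G}

theorem act_one' (mp : IsMatchedPair act coact) (g : G) : act g 1 = 1 := by
  have h := mp.act_mul g 1 1
  rw [mp.coact_one, one_mul] at h
  exact (left_eq_mul.mp h)

theorem one_coact' (mp : IsMatchedPair act coact) (h : H) : coact 1 h = 1 := by
  have e := mp.mul_coact 1 1 h
  rw [mp.one_act, one_mul] at e
  exact (left_eq_mul.mp e)

lemma act_leftInv (mp : IsMatchedPair act coact) (g : G) (h : H) : act g⁻¹ (act g h) = h := by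
  rw [← mp.mul_act, inv_mul_cancel, mp.one_act]

lemma act_rightInv (mp : IsMatchedPair act coact) (g : G) (h : H) : act g (act g⁻¹ h) = h := by
  rw [← mp.mul_act, mul_inv_cancel, mp.one_act]

lemma coact_leftInv (mp : IsMatchedPair act coact) (g : G) (h : H) :
    coact (coact g h) h⁻¹ = g := by
  rw [← mp.coact_mul, mul_inv_cancel, mp.coact_one]

lemma coact_rightInv (mp : IsMatchedPair act coact) (g : G) (h : H) :
    coact (coact g h⁻¹) h = g := by
  rw [← mp.coact_mul, inv_mul_cancel, mp.coact_one]

/-- permutation powers agree on exponents congruent mod a multiple of the order -/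
lemma pow_val_mod {α : Type*} (σ : Equiv.Perm α) {k : ℕ} (hσ : orderOf σ ∣ k) {i j : ℕ}
    (hij : i ≡ j [MOD k]) : σ ^ i = σ ^ j :=
  pow_eq_pow_iff_modEq.mpr (hij.of_dvd hσ)

lemma gen_pow {k : ℕ} [NeZero k] (y : ZMod k) :
    Multiplicative.ofAdd (1 : ZMod k) ^ y.val = Multiplicative.ofAdd y := by
  rw [← ofAdd_nsmul]
  congr 1
  simp [nsmul_eq_mul, ZMod.natCast_val, ZMod.cast_id]

section Cyclic

variable {n m : ℕ} [NeZero n] [NeZero m]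
variable {act : Multiplicative (ZMod m) → Multiplicative (ZMod n) → Multiplicative (ZMod n)}
variable {coact : Multiplicative (ZMod m) → Multiplicative (ZMod n) → Multiplicative (ZMod m)}

/-- θ extracted from a matched pair -/
def theta (mp : IsMatchedPair act coact) : Equiv.Perm (ZMod n) where
  toFun x := toAdd (act (ofAdd 1) (ofAdd x))
  invFun x := toAdd (act (ofAdd 1)⁻¹ (ofAdd x))
  left_inv x := by simp [act_leftInv mp]
  right_inv x := by simp [act_rightInv mp]

/-- φ extracted from a matched pair -/
def phi (mp : IsMatchedPair act coact) : Equiv.Perm (ZMod m) where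
  toFun y := toAdd (coact (ofAdd y) (ofAdd 1))
  invFun y := toAdd (coact (ofAdd y) (ofAdd 1)⁻¹)
  left_inv y := by simp [coact_leftInv mp]
  right_inv y := by simp [coact_rightInv mp]

lemma act_pow (mp : IsMatchedPair act coact) (i : ℕ) (x : ZMod n) :
    act (ofAdd (1 : ZMod m) ^ i) (ofAdd x) = ofAdd ((theta mp ^ i) x) := by
  induction i with
  | zero => simp [mp.one_act]
  | succ i ih =>
      rw [pow_succ', mp.mul_act, ih, pow_succ']
      rfl

lemma coact_pow (mp : IsMatchedPair act coact) (j : ℕ) (y : ZMod m) :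
    coact (ofAdd y) (ofAdd (1 : ZMod n) ^ j) = ofAdd ((phi mp ^ j) y) := by
  induction j with
  | zero => simp [mp.coact_one]
  | succ j ih =>
      rw [pow_succ, mp.coact_mul, ih, pow_succ']
      rfl

lemma act_eq (mp : IsMatchedPair act coact) (y : ZMod m) (x : ZMod n) :
    act (ofAdd y) (ofAdd x) = ofAdd ((theta mp ^ y.val) x) := by
  rw [← gen_pow y, act_pow mp]

lemma coact_eq (mp : IsMatchedPair act coact) (y : ZMod m) (x : ZMod n) :
    coact (ofAdd y) (ofAdd x) = ofAdd ((phi mp ^ x.val) y) := by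
  rw [← gen_pow x, coact_pow mp]

lemma theta_zero (mp : IsMatchedPair act coact) : theta mp 0 = 0 := by
  show toAdd (act (ofAdd 1) (ofAdd (0 : ZMod n))) = 0
  rw [ofAdd_zero, act_one' mp]; rfl

lemma phi_zero (mp : IsMatchedPair act coact) : phi mp 0 = 0 := by
  show toAdd (coact (ofAdd (0 : ZMod m)) (ofAdd 1)) = 0
  rw [ofAdd_zero, one_coact' mp]; rfl

lemma gen_pow_self_m : Multiplicative.ofAdd (1 : ZMod m) ^ m = 1 := by
  rw [← ofAdd_nsmul]
  simp [nsmul_eq_mul]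

lemma theta_order (mp : IsMatchedPair act coact) : orderOf (theta mp) ∣ m := by
  apply orderOf_dvd_of_pow_eq_one
  ext x
  have := act_pow mp m x
  rw [gen_pow_self_m, mp.one_act] at this
  have := ofAdd.injective this.symm
  simpa using this

lemma phi_order (mp : IsMatchedPair act coact) : orderOf (phi mp) ∣ n := by
  apply orderOf_dvd_of_pow_eq_one
  ext y
  have := coact_pow mp n y
  rw [gen_pow_self_m, mp.coact_one] at this
  have := ofAdd.injective this.symm
  simpa using this

lemma ident1 (mp : IsMatchedPair act coact) (x z : ZMod n) (y : ZMod m) :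
    (theta mp ^ y.val) (x + z) - (theta mp ^ y.val) z =
      (theta mp ^ ((phi mp ^ z.val) y).val) x := by
  have h := mp.act_mul (ofAdd y) (ofAdd z) (ofAdd x)
  rw [← ofAdd_add, act_eq mp, act_eq mp, coact_eq mp, act_eq mp, ← ofAdd_add] at h
  have h' := ofAdd.injective h
  rw [add_comm z x] at h'
  rw [h']
  ring

lemma ident2 (mp : IsMatchedPair act coact) (x z : ZMod m) (y : ZMod n) :
    (phi mp ^ y.val) (x + z) - (phi mp ^ y.val) z =
      (phi mp ^ ((theta mp ^ z.val) y).val) x := by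
  have h := mp.mul_coact (ofAdd x) (ofAdd z) (ofAdd y)
  rw [← ofAdd_add, coact_eq mp, act_eq mp, coact_eq mp, coact_eq mp, ← ofAdd_add] at h
  have h' := ofAdd.injective h
  rw [h']
  ring

/-- backwards: action built from a permutation pair -/
def bact (θ : Equiv.Perm (ZMod n)) (g : Multiplicative (ZMod m))
    (h : Multiplicative (ZMod n)) : Multiplicative (ZMod n) :=
  ofAdd ((θ ^ (toAdd g).val) (toAdd h))

def bcoact (φ : Equiv.Perm (ZMod m)) (g : Multiplicative (ZMod m))
    (h : Multiplicative (ZMod n)) : Multiplicative (ZMod m) :=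
  ofAdd ((φ ^ (toAdd h).val) (toAdd g))

lemma pow_val_add {α : Type*} (σ : Equiv.Perm α) {k : ℕ} [NeZero k] (hσ : orderOf σ ∣ k)
    (u v : ZMod k) : σ ^ (u + v).val = σ ^ u.val * σ ^ v.val := by
  rw [← pow_add]
  exact pow_val_mod σ hσ (by rw [ZMod.val_add]; exact Nat.mod_modEq _ _)

lemma bmp (θ : Equiv.Perm (ZMod n)) (φ : Equiv.Perm (ZMod m))
    (hθm : orderOf θ ∣ m) (hφn : orderOf φ ∣ n)
    (h1 : ∀ (x z : ZMod n) (y : ZMod m),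
      (θ ^ y.val) (x + z) - (θ ^ y.val) z = (θ ^ ((φ ^ z.val) y).val) x)
    (h2 : ∀ (x z : ZMod m) (y : ZMod n),
      (φ ^ y.val) (x + z) - (φ ^ y.val) z = (φ ^ ((θ ^ z.val) y).val) x) :
    IsMatchedPair (bact (m := m) θ) (bcoact (n := n) φ) where
  one_act h := by
    show ofAdd ((θ ^ (0 : ZMod m).val) (toAdd h)) = h
    simp [ZMod.val_zero]
  mul_act g₁ g₂ h := by
    show ofAdd ((θ ^ (toAdd g₁ + toAdd g₂).val) (toAdd h)) = _
    rw [pow_val_add θ hθm]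
    rfl
  coact_one g := by
    show ofAdd ((φ ^ (0 : ZMod n).val) (toAdd g)) = g
    simp [ZMod.val_zero]
  coact_mul g h₁ h₂ := by
    show ofAdd ((φ ^ (toAdd h₁ + toAdd h₂).val) (toAdd g)) = _
    rw [pow_val_add φ hφn, ← pow_add, Nat.add_comm, pow_add]
    rfl
  act_mul g h₁ h₂ := by
    show ofAdd ((θ ^ (toAdd g).val) (toAdd h₁ + toAdd h₂)) = _
    have := h1 (toAdd h₂) (toAdd h₁) (toAdd g)
    rw [sub_eq_iff_eq_add] at this
    rw [add_comm (toAdd h₁) (toAdd h₂), this]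
    rw [add_comm]
    rfl
  mul_coact g₁ g₂ h := by
    show ofAdd ((φ ^ (toAdd h).val) (toAdd g₁ + toAdd g₂)) = _
    have := h2 (toAdd g₁) (toAdd g₂) (toAdd h)
    rw [sub_eq_iff_eq_add] at this
    rw [this]
    rfl

end Cyclic
end MPAux


/-- **Matched pairs of finite cyclic groups.** There is a one-to-one
correspondence between matched pairs `(C_n, C_m, α, β)` and pairs `(θ, φ)` of
bijections of `ℤ_n` resp. `ℤ_m` with `θ(0) = 0`, `φ(0) = 0`, `ord(θ) ∣ m`,
`ord(φ) ∣ n`, `θ^y(x + z) - θ^y(z) = θ^(φ^z(y))(x)` and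
`φ^y(x + z) - φ^y(z) = φ^(θ^z(y))(x)`; the correspondence is given by
`α(bⁱ, aˣ) = a^(θⁱ(x))` and `β(b^y, a^j) = b^(φ^j(y))`. -/
theorem matchedPairs_Cn_Cm_correspondence {n m : ℕ} (hn : 0 < n) (hm : 0 < m) :
    ∃ e : {p : (Multiplicative (ZMod m) → Multiplicative (ZMod n) → Multiplicative (ZMod n)) ×
            (Multiplicative (ZMod m) → Multiplicative (ZMod n) → Multiplicative (ZMod m)) //
            IsMatchedPair p.1 p.2} ≃
          {q : Equiv.Perm (ZMod n) × Equiv.Perm (ZMod m) //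
            q.1 0 = 0 ∧ q.2 0 = 0 ∧ orderOf q.1 ∣ m ∧ orderOf q.2 ∣ n ∧
            (∀ (x z : ZMod n) (y : ZMod m),
              (q.1 ^ y.val) (x + z) - (q.1 ^ y.val) z =
                (q.1 ^ ((q.2 ^ z.val) y).val) x) ∧
            (∀ (x z : ZMod m) (y : ZMod n),
              (q.2 ^ y.val) (x + z) - (q.2 ^ y.val) z =
                (q.2 ^ ((q.1 ^ z.val) y).val) x)},
      ∀ p, (∀ (i : ℕ) (x : ZMod n),
          p.val.1 (Multiplicative.ofAdd (1 : ZMod m) ^ i) (Multiplicative.ofAdd x) =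
            Multiplicative.ofAdd (((e p).val.1 ^ i) x)) ∧
        (∀ (j : ℕ) (y : ZMod m),
          p.val.2 (Multiplicative.ofAdd y) (Multiplicative.ofAdd (1 : ZMod n) ^ j) =
            Multiplicative.ofAdd (((e p).val.2 ^ j) y)) := by
  haveI : NeZero n := ⟨hn.ne'⟩
  haveI : NeZero m := ⟨hm.ne'⟩
  refine ⟨{
    toFun := fun p => ⟨(MPAux.theta p.2, MPAux.phi p.2),
      MPAux.theta_zero p.2, MPAux.phi_zero p.2, MPAux.theta_order p.2, MPAux.phi_order p.2,
      MPAux.ident1 p.2, MPAux.ident2 p.2⟩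
    invFun := fun q => ⟨(MPAux.bact q.1.1, MPAux.bcoact q.1.2),
      MPAux.bmp q.1.1 q.1.2 q.2.2.2.1 q.2.2.2.2.1 q.2.2.2.2.2.1 q.2.2.2.2.2.2⟩
    left_inv := ?_
    right_inv := ?_ }, ?_⟩
  · intro p
    apply Subtype.ext
    refine Prod.ext ?_ ?_
    · funext g h
      show Multiplicative.ofAdd ((MPAux.theta p.2 ^ (Multiplicative.toAdd g).val)
        (Multiplicative.toAdd h)) = p.val.1 g h
      rw [← MPAux.act_eq p.2, ofAdd_toAdd, ofAdd_toAdd]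
    · funext g h
      show Multiplicative.ofAdd ((MPAux.phi p.2 ^ (Multiplicative.toAdd h).val)
        (Multiplicative.toAdd g)) = p.val.2 g h
      rw [← MPAux.coact_eq p.2, ofAdd_toAdd, ofAdd_toAdd]
  · intro q
    apply Subtype.ext
    obtain ⟨⟨θ, φ⟩, hθ0, hφ0, hθm, hφn, h1, h2⟩ := q
    refine Prod.ext ?_ ?_
    · ext x
      show (θ ^ (1 : ZMod m).val) x = θ x
      rw [MPAux.pow_val_mod θ hθm
        (show (1 : ZMod m).val ≡ 1 [MOD m] by
          rw [ZMod.val_one_eq_one_mod]; exact Nat.mod_modEq _ _), pow_one]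
    · ext y
      show (φ ^ (1 : ZMod n).val) y = φ y
      rw [MPAux.pow_val_mod φ hφn
        (show (1 : ZMod n).val ≡ 1 [MOD n] by
          rw [ZMod.val_one_eq_one_mod]; exact Nat.mod_modEq _ _), pow_one]
  · intro p
    exact ⟨fun i x => MPAux.act_pow p.2 i x, fun j y => MPAux.coact_pow p.2 j y⟩
end
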